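/- Let U ∈ U(N) be a unitary matrix with all entries nonzero that locally maximizes the 1-norm on U(N), and set S_{ij} = sgn(U_{ij}). Then the matrix S*·U is self-adjoint, and for every anti-hermitian matrix A ∈ M_N(ℂ) one has Tr(S*·U·A²) + Σ_{i,j} (Im[(UA)_{ij}·conj(S_{ij})])² / |U_{ij}| ≤ 0. -/

import Mathlib

open scoped Matrix ComplexConjugate
open Filter Topology

/-- the sign `sgn(z) = z/|z|` of a complex number (with `sgn 0 = 0`). -/
noncomputable def csgn (z : ℂ) : ℂ := z / ‖z‖

section Aux

/-- Second derivative test (necessary condition) at a local max. -/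
lemma second_deriv_nonpos_of_isLocalMax {f f' : ℝ → ℝ} {c : ℝ}
    (hf : ∀ᶠ t in 𝓝 (0:ℝ), HasDerivAt f (f' t) t)
    (hf' : HasDerivAt f' c 0) (h0 : f' 0 = 0)
    (hmax : IsLocalMax f 0) : c ≤ 0 := by
  by_contra hc
  push_neg at hc
  have hslope : Tendsto (fun t => f' t / t) (𝓝[≠] (0:ℝ)) (𝓝 c) := by
    have h := hasDerivAt_iff_tendsto_slope.mp hf'
    have : slope f' 0 = fun t => f' t / t := by
      funext t
      simp [slope_def_field, h0, div_eq_inv_mul]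
    rwa [this] at h
  have hpos : ∀ᶠ t in 𝓝[>] (0:ℝ), 0 < f' t := by
    have h1 : ∀ᶠ t in 𝓝[>] (0:ℝ), 0 < f' t / t := by
      have := (hslope.mono_left (nhdsWithin_mono 0 (fun x hx => ne_of_gt hx))).eventually
        (eventually_gt_nhds hc)
      exact this
    filter_upwards [h1, self_mem_nhdsWithin] with t ht ht'
    have : 0 < t := ht'
    have := mul_pos ht this
    rwa [div_mul_cancel₀] at this
    exact ne_of_gt ‹0 < t›
  have hcomb : ∀ᶠ t in 𝓝[>] (0:ℝ),
      0 < f' t ∧ HasDerivAt f (f' t) t ∧ f t ≤ f 0 :=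
    hpos.and ((hf.and hmax).filter_mono nhdsWithin_le_nhds)
  rw [eventually_nhdsWithin_iff] at hcomb
  obtain ⟨δ, hδ, h1⟩ := Metric.eventually_nhds_iff.mp hcomb
  set b := δ/2 with hb
  have hbpos : 0 < b := by positivity
  have hbδ : ∀ t : ℝ, 0 < t → t ≤ b → 0 < f' t ∧ HasDerivAt f (f' t) t ∧ f t ≤ f 0 := by
    intro t ht htb
    refine h1 ?_ ht
    rw [Real.dist_eq, sub_zero, abs_of_pos ht]
    linarith
  have hmono : StrictMonoOn f (Set.Icc 0 b) := by
    apply strictMonoOn_of_deriv_pos (convex_Icc 0 b)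
    · intro x hx
      rcases eq_or_lt_of_le hx.1 with h | h
      · subst h
        exact (hf.self_of_nhds.continuousAt).continuousWithinAt
      · exact ((hbδ x h hx.2).2.1.continuousAt).continuousWithinAt
    · intro x hx
      rw [interior_Icc] at hx
      have := hbδ x hx.1 (le_of_lt hx.2)
      rw [this.2.1.deriv]
      exact this.1
  have hlt : f 0 < f b := hmono (Set.left_mem_Icc.2 (le_of_lt hbpos))
    (Set.right_mem_Icc.2 (le_of_lt hbpos)) hbpos
  have := (hbδ b hbpos le_rfl).2.2
  linarith

/-- Derivative of the absolute value of a nonvanishing complex-valued curve. -/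
lemma hasDerivAt_cabs {z : ℝ → ℂ} {w : ℂ} {t : ℝ} (hz : HasDerivAt z w t) (h0 : z t ≠ 0) :
    HasDerivAt (fun s => ‖z s‖) ((w * conj (z t)).re / ‖z t‖) t := by
  have hre : HasDerivAt (fun s => (z s).re) w.re t := by
    exact Complex.reCLM.hasFDerivAt.comp_hasDerivAt t hz
  have him : HasDerivAt (fun s => (z s).im) w.im t := by
    exact Complex.imCLM.hasFDerivAt.comp_hasDerivAt t hz
  have hn : HasDerivAt (fun s => (z s).re * (z s).re + (z s).im * (z s).im)
      (w.re * (z t).re + (z t).re * w.re + (w.im * (z t).im + (z t).im * w.im)) t :=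
    (hre.mul hre).add (him.mul him)
  have hne : (z t).re * (z t).re + (z t).im * (z t).im ≠ 0 := by
    have := Complex.normSq_pos.mpr h0
    rw [Complex.normSq_apply] at this
    exact ne_of_gt this
  have hs := (Real.hasDerivAt_sqrt hne).comp t hn
  have hfun : (fun s => ‖z s‖) =
      (Real.sqrt ∘ fun s => (z s).re * (z s).re + (z s).im * (z s).im) := by
    funext s
    simp [Complex.norm_def, Complex.normSq_apply, Function.comp]
  rw [hfun]
  refine hs.congr_deriv ?_
  symm
  have hpos : 0 < Real.sqrt ((z t).re * (z t).re + (z t).im * (z t).im) := by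
    apply Real.sqrt_pos.mpr
    have := Complex.normSq_pos.mpr h0
    rwa [Complex.normSq_apply] at this
  rw [Complex.norm_def, Complex.normSq_apply, Complex.mul_re, Complex.conj_re, Complex.conj_im]
  field_simp
  ring

lemma expEntryDeriv (N : ℕ) (A : Matrix (Fin N) (Fin N) ℂ)
    (l : Matrix (Fin N) (Fin N) ℂ →ₗ[ℝ] ℂ) (t : ℝ) :
    HasDerivAt (fun s : ℝ => l (NormedSpace.exp (s • A)))
      (l (NormedSpace.exp (t • A) * A)) t := by
  letI : SeminormedRing (Matrix (Fin N) (Fin N) ℂ) := Matrix.linftyOpSemiNormedRing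
  letI : NormedRing (Matrix (Fin N) (Fin N) ℂ) := Matrix.linftyOpNormedRing
  letI : NormedAlgebra ℝ (Matrix (Fin N) (Fin N) ℂ) := Matrix.linftyOpNormedAlgebra
  have h := hasDerivAt_exp_smul_const A t
  have hl := (LinearMap.toContinuousLinearMap l).hasFDerivAt.comp_hasDerivAt t h
  exact hl

lemma expUnitary (N : ℕ) (A : Matrix (Fin N) (Fin N) ℂ) (hA : Aᴴ = -A) (t : ℝ) :
    NormedSpace.exp (t • A) ∈ Matrix.unitaryGroup (Fin N) ℂ := by
  letI : SeminormedRing (Matrix (Fin N) (Fin N) ℂ) := Matrix.linftyOpSemiNormedRing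
  letI : NormedRing (Matrix (Fin N) (Fin N) ℂ) := Matrix.linftyOpNormedRing
  letI : NormedAlgebra ℝ (Matrix (Fin N) (Fin N) ℂ) := Matrix.linftyOpNormedAlgebra
  letI : NormedAlgebra ℚ (Matrix (Fin N) (Fin N) ℂ) := Matrix.linftyOpNormedAlgebra
  have hc : ContinuousStar (Matrix (Fin N) (Fin N) ℂ) := ⟨continuous_id.matrix_conjTranspose⟩
  apply @NormedSpace.exp_mem_unitary_of_mem_skewAdjoint _ _ _ _ _ hc
  rw [skewAdjoint.mem_iff]
  show (t • A)ᴴ = -(t • A)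
  rw [Matrix.conjTranspose_smul, hA]
  simp [Complex.star_def]

/-- The `ℝ`-linear map `X ↦ (M * X * B) i j`. -/
noncomputable def entryL (N : ℕ) (M B : Matrix (Fin N) (Fin N) ℂ) (i j : Fin N) :
    Matrix (Fin N) (Fin N) ℂ →ₗ[ℝ] ℂ where
  toFun X := (M * X * B) i j
  map_add' X Y := by simp [Matrix.mul_add, Matrix.add_mul]
  map_smul' r X := by simp [Matrix.mul_smul, Matrix.smul_mul]

lemma hasDerivAt_entry (N : ℕ) (M B A : Matrix (Fin N) (Fin N) ℂ) (i j : Fin N) (t : ℝ) :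
    HasDerivAt (fun s : ℝ => (M * NormedSpace.exp (s • A) * B) i j)
      ((M * NormedSpace.exp (t • A) * A * B) i j) t := by
  have h := expEntryDeriv N A (entryL N M B i j) t
  have e : entryL N M B i j (NormedSpace.exp (t • A) * A)
      = (M * NormedSpace.exp (t • A) * A * B) i j := by
    show (M * (NormedSpace.exp (t • A) * A) * B) i j = _
    rw [← Matrix.mul_assoc]
  rw [e] at h
  exact h

lemma hasDerivAt_entry' (N : ℕ) (M A : Matrix (Fin N) (Fin N) ℂ) (i j : Fin N) (t : ℝ) :
    HasDerivAt (fun s : ℝ => (M * NormedSpace.exp (s • A)) i j)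
      ((M * NormedSpace.exp (t • A) * A) i j) t := by
  have h := hasDerivAt_entry N M 1 A i j t
  simpa [Matrix.mul_one] using h

end Aux

/-- If `U ∈ U(N)` has nonzero entries and locally maximizes the 1-norm
on `U(N)`, then with `S_{ij} = sgn(U_{ij})` the matrix `S*·U` is self-adjoint, and
`Tr(S*·U·A²) + ∑_{i,j} (Im[(UA)_{ij}·conj S_{ij}])²/|U_{ij}| ≤ 0` for every
anti-hermitian `A` (the trace being real since `S*·U` is self-adjoint). -/
theorem stmt11 (N : ℕ) (U : Matrix (Fin N) (Fin N) ℂ)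
    (hU : U ∈ Matrix.unitaryGroup (Fin N) ℂ) (hne : ∀ i j, U i j ≠ 0)
    (hmax : ∃ ε > (0 : ℝ), ∀ V ∈ Matrix.unitaryGroup (Fin N) ℂ,
      (∀ i j, ‖V i j - U i j‖ < ε) →
        ∑ i, ∑ j, ‖V i j‖ ≤ ∑ i, ∑ j, ‖U i j‖)
    (S : Matrix (Fin N) (Fin N) ℂ) (hS : S = Matrix.of fun i j => csgn (U i j)) :
    (Sᴴ * U).IsHermitian ∧
    ∀ A : Matrix (Fin N) (Fin N) ℂ, Aᴴ = -A →
      (Matrix.trace (Sᴴ * U * (A * A))).re +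
        ∑ i, ∑ j, (((U * A) i j * conj (S i j)).im) ^ 2 / ‖U i j‖ ≤ 0 := by
  obtain ⟨ε, hε, hmaxV⟩ := hmax
  have habs : ∀ i j, 0 < ‖U i j‖ := fun i j => norm_pos_iff.mpr (hne i j)
  have hconjS : ∀ i j, conj (S i j) = conj (U i j) / (‖U i j‖ : ℂ) := by
    intro i j
    rw [hS]
    show conj (csgn (U i j)) = _
    rw [csgn, map_div₀, Complex.conj_ofReal]
  have hre : ∀ (i j : Fin N) (w : ℂ),
      (w * conj (S i j)).re = (w * conj (U i j)).re / ‖U i j‖ := by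
    intro i j w
    rw [hconjS, ← mul_div_assoc, Complex.div_ofReal_re]
  have him : ∀ (i j : Fin N) (w : ℂ),
      (w * conj (S i j)).im = (w * conj (U i j)).im / ‖U i j‖ := by
    intro i j w
    rw [hconjS, ← mul_div_assoc, Complex.div_ofReal_im]
  have htr : ∀ M : Matrix (Fin N) (Fin N) ℂ, (Matrix.trace (Sᴴ * M)).re
      = ∑ i, ∑ j, (M i j * conj (S i j)).re := by
    intro M
    have h1 : Matrix.trace (Sᴴ * M) = ∑ j, ∑ i, conj (S i j) * M i j := by
      simp [Matrix.trace, Matrix.diag, Matrix.mul_apply, Matrix.conjTranspose_apply,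
        Complex.star_def]
    rw [h1]
    simp only [Complex.re_sum]
    rw [Finset.sum_comm]
    exact Finset.sum_congr rfl fun i _ => Finset.sum_congr rfl fun j _ => by rw [mul_comm]
  -- the key variational facts
  have key : ∀ A : Matrix (Fin N) (Fin N) ℂ, Aᴴ = -A →
      ((∑ i, ∑ j, ((U * A) i j * conj (U i j)).re / ‖U i j‖) = 0 ∧
      (∑ i, ∑ j, (((U * A * A) i j * conj (S i j)).re
        + (((U * A) i j * conj (S i j)).im) ^ 2 / ‖U i j‖)) ≤ 0) := by
    intro A hA
    have hz : ∀ (i j : Fin N) (t : ℝ),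
        HasDerivAt (fun s : ℝ => (U * NormedSpace.exp (s • A)) i j)
          ((U * NormedSpace.exp (t • A) * A) i j) t :=
      fun i j t => hasDerivAt_entry' N U A i j t
    have hz1 : ∀ (i j : Fin N) (t : ℝ),
        HasDerivAt (fun s : ℝ => (U * NormedSpace.exp (s • A) * A) i j)
          ((U * NormedSpace.exp (t • A) * A * A) i j) t :=
      fun i j t => hasDerivAt_entry N U A A i j t
    have hE0 : NormedSpace.exp ((0:ℝ) • A) = (1 : Matrix (Fin N) (Fin N) ℂ) := by
      rw [zero_smul]; exact NormedSpace.exp_zero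
    have hU0 : ∀ i j, (U * NormedSpace.exp ((0:ℝ) • A)) i j = U i j := by
      intro i j; rw [hE0, Matrix.mul_one]
    have hU1 : ∀ i j, (U * NormedSpace.exp ((0:ℝ) • A) * A) i j = (U * A) i j := by
      intro i j; rw [hE0, Matrix.mul_one]
    have hU2 : ∀ i j, (U * NormedSpace.exp ((0:ℝ) • A) * A * A) i j = (U * A * A) i j := by
      intro i j; rw [hE0, Matrix.mul_one]
    set f : ℝ → ℝ := fun s => ∑ i, ∑ j, ‖(U * NormedSpace.exp (s • A)) i j‖
      with hf_def
    set g : ℝ → ℝ := fun s => ∑ i, ∑ j,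
      ((U * NormedSpace.exp (s • A) * A) i j * conj ((U * NormedSpace.exp (s • A)) i j)).re
        / ‖(U * NormedSpace.exp (s • A)) i j‖ with hg_def
    have hopen : ∀ᶠ s in 𝓝 (0:ℝ), ∀ i j, (U * NormedSpace.exp (s • A)) i j ≠ 0 := by
      rw [eventually_all]
      intro i
      rw [eventually_all]
      intro j
      exact (hz i j 0).continuousAt.eventually_ne (by rw [hU0]; exact hne i j)
    have hfd : ∀ᶠ s in 𝓝 (0:ℝ), HasDerivAt f (g s) s := by
      filter_upwards [hopen] with s hs
      exact HasDerivAt.fun_sum fun i _ => HasDerivAt.fun_sum fun j _ =>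
        hasDerivAt_cabs (hz i j s) (hs i j)
    have hclose : ∀ᶠ s in 𝓝 (0:ℝ), ∀ i j,
        ‖(U * NormedSpace.exp (s • A)) i j - U i j‖ < ε := by
      rw [eventually_all]
      intro i
      rw [eventually_all]
      intro j
      have hc : ContinuousAt
          (fun s : ℝ => ‖(U * NormedSpace.exp (s • A)) i j - U i j‖) 0 :=
        continuous_norm.continuousAt.comp (((hz i j 0).continuousAt).sub continuousAt_const)
      have h0 : ‖(U * NormedSpace.exp ((0:ℝ) • A)) i j - U i j‖ = 0 := by
        rw [hU0]; simp
      have hc' := hc.tendsto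
      rw [h0] at hc'
      exact hc'.eventually (eventually_lt_nhds hε)
    have hmem : ∀ s : ℝ, U * NormedSpace.exp (s • A) ∈ Matrix.unitaryGroup (Fin N) ℂ :=
      fun s => mul_mem hU (expUnitary N A hA s)
    have hf0 : f 0 = ∑ i, ∑ j, ‖U i j‖ := by
      rw [hf_def]
      exact Finset.sum_congr rfl fun i _ => Finset.sum_congr rfl fun j _ => by rw [hU0]
    have hlocmax : IsLocalMax f 0 := by
      show ∀ᶠ s in 𝓝 (0:ℝ), f s ≤ f 0
      filter_upwards [hclose] with s hsmall
      rw [hf0]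
      exact hmaxV _ (hmem s) hsmall
    have hg0 : g 0 = 0 := hlocmax.hasDerivAt_eq_zero hfd.self_of_nhds
    -- second derivative of g at 0
    have hconjz : ∀ i j, HasDerivAt (fun s : ℝ => conj ((U * NormedSpace.exp (s • A)) i j))
        (conj ((U * A) i j)) (0:ℝ) := by
      intro i j
      have h := Complex.conjCLE.hasFDerivAt.comp_hasDerivAt (0:ℝ) (hz i j 0)
      simp only [Function.comp_def, ContinuousLinearEquiv.coe_coe, Complex.conjCLE_apply,
        hU1] at h
      exact h
    have hnum : ∀ i j, HasDerivAt
        (fun s : ℝ => ((U * NormedSpace.exp (s • A) * A) i j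
          * conj ((U * NormedSpace.exp (s • A)) i j)).re)
        (((U * A * A) i j * conj (U i j) + (U * A) i j * conj ((U * A) i j)).re) (0:ℝ) := by
      intro i j
      have h1 := (hz1 i j 0).mul (hconjz i j)
      rw [hU0, hU1, hU2] at h1
      have h2 := Complex.reCLM.hasFDerivAt.comp_hasDerivAt (0:ℝ) h1
      simp only [Function.comp_def, Complex.reCLM_apply] at h2
      exact h2
    have habsd : ∀ i j, HasDerivAt
        (fun s : ℝ => ‖(U * NormedSpace.exp (s • A)) i j‖)
        (((U * A) i j * conj (U i j)).re / ‖U i j‖) (0:ℝ) := by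
      intro i j
      have h := hasDerivAt_cabs (hz i j 0) (by rw [hU0]; exact hne i j)
      rw [hU0, hU1] at h
      exact h
    have hgd : HasDerivAt g (∑ i, ∑ j,
        ((((U * A * A) i j * conj (U i j) + (U * A) i j * conj ((U * A) i j)).re)
            * ‖U i j‖
          - ((U * A) i j * conj (U i j)).re
            * (((U * A) i j * conj (U i j)).re / ‖U i j‖))
          / (‖U i j‖) ^ 2) 0 := by
      apply HasDerivAt.fun_sum
      intro i _
      apply HasDerivAt.fun_sum
      intro j _
      have hraw := (hnum i j).div (habsd i j) (by rw [hU0]; exact ne_of_gt (habs i j))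
      rw [hU0, hU1] at hraw
      exact hraw
    have hc := second_deriv_nonpos_of_isLocalMax hfd hgd hg0 hlocmax
    constructor
    · have hgeq : g 0 = ∑ i, ∑ j, ((U * A) i j * conj (U i j)).re / ‖U i j‖ := by
        rw [hg_def]
        exact Finset.sum_congr rfl fun i _ => Finset.sum_congr rfl fun j _ => by
          rw [hU0, hU1]
      rw [← hgeq]
      exact hg0
    · refine le_trans (le_of_eq ?_) hc
      refine (Finset.sum_congr rfl fun i _ => Finset.sum_congr rfl fun j _ => ?_).symm
      set u := U i j with hu
      set w1 := (U * A) i j with hw1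
      set w2 := (U * A * A) i j with hw2
      set a := ‖U i j‖ with ha_def
      have ha : 0 < a := habs i j
      have hane : a ≠ 0 := ne_of_gt ha
      rw [hre i j w2, him i j w1]
      rw [← ha_def, ← hu]
      have hw1c : (w1 * conj w1).re = Complex.normSq w1 := by
        rw [Complex.mul_conj, Complex.ofReal_re]
      have hid : Complex.normSq w1
          = (((w1 * conj u).re) ^ 2 + ((w1 * conj u).im) ^ 2) / a ^ 2 := by
        have h1 : ((w1 * conj u).re) ^ 2 + ((w1 * conj u).im) ^ 2
            = Complex.normSq (w1 * conj u) := by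
          rw [Complex.normSq_apply]; ring
        rw [h1, map_mul Complex.normSq, Complex.normSq_conj, ← Complex.sq_norm]
        have h2 : a ^ 2 = Complex.normSq u := Complex.sq_norm u
        rw [← h2]
        field_simp
      rw [Complex.add_re, hw1c, hid]
      field_simp
      ring
  -- trace of Sᴴ U A vanishes for anti-hermitian A
  have hBtr : ∀ A : Matrix (Fin N) (Fin N) ℂ, Aᴴ = -A →
      (Matrix.trace (Sᴴ * U * A)).re = 0 := by
    intro A hA
    rw [Matrix.mul_assoc, htr (U * A)]
    calc ∑ i, ∑ j, ((U * A) i j * conj (S i j)).re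
        = ∑ i, ∑ j, ((U * A) i j * conj (U i j)).re / ‖U i j‖ :=
          Finset.sum_congr rfl fun i _ => Finset.sum_congr rfl fun j _ => hre i j _
      _ = 0 := (key A hA).1
  constructor
  · -- Hermitian part
    set B := Sᴴ * U with hBdef
    set K := B - Bᴴ with hKdef
    have hKa : Kᴴ = -K := by
      rw [hKdef, Matrix.conjTranspose_sub, Matrix.conjTranspose_conjTranspose, neg_sub]
    have h1 : (Matrix.trace (B * K)).re = 0 := hBtr K hKa
    have h2 : (Matrix.trace (Bᴴ * K)).re = 0 := by
      have e1 : (Bᴴ * K)ᴴ = -(K * B) := by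
        rw [Matrix.conjTranspose_mul, Matrix.conjTranspose_conjTranspose, hKa, Matrix.neg_mul]
      have e2 : Matrix.trace ((Bᴴ * K)ᴴ) = star (Matrix.trace (Bᴴ * K)) :=
        Matrix.trace_conjTranspose _
      have e3 : star (Matrix.trace (Bᴴ * K)) = -(Matrix.trace (B * K)) := by
        rw [← e2, e1, Matrix.trace_neg, Matrix.trace_mul_comm]
      have e4 : (Matrix.trace (Bᴴ * K)).re = (star (Matrix.trace (Bᴴ * K))).re := by
        rw [Complex.star_def, Complex.conj_re]
      rw [e4, e3, Complex.neg_re, h1, neg_zero]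
    have h3 : (Matrix.trace (K * K)).re = 0 := by
      have e : K * K = B * K - Bᴴ * K := by rw [hKdef, Matrix.sub_mul]
      rw [e, Matrix.trace_sub, Complex.sub_re, h1, h2, sub_zero]
    have h4 : Matrix.trace (K * K) = -Matrix.trace (Kᴴ * K) := by
      have e : Kᴴ * K = -(K * K) := by rw [hKa, Matrix.neg_mul]
      rw [e, Matrix.trace_neg, neg_neg]
    have h5 : (Matrix.trace (Kᴴ * K)).re = ∑ j, ∑ i, Complex.normSq (K i j) := by
      have e : Matrix.trace (Kᴴ * K) = ∑ j, ∑ i, conj (K i j) * K i j := by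
        simp [Matrix.trace, Matrix.diag, Matrix.mul_apply, Matrix.conjTranspose_apply,
          Complex.star_def]
      rw [e]
      simp only [Complex.re_sum]
      exact Finset.sum_congr rfl fun j _ => Finset.sum_congr rfl fun i _ => by
        rw [mul_comm, Complex.mul_conj, Complex.ofReal_re]
    have h6 : ∑ j, ∑ i, Complex.normSq (K i j) = 0 := by
      have := h3
      rw [h4, Complex.neg_re, h5, neg_eq_zero] at this
      exact this
    have h7 : K = 0 := by
      ext i j
      have hnn : ∀ j ∈ Finset.univ, (0:ℝ) ≤ ∑ i, Complex.normSq (K i j) :=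
        fun j _ => Finset.sum_nonneg fun i _ => Complex.normSq_nonneg _
      have hj := (Finset.sum_eq_zero_iff_of_nonneg hnn).mp h6 j (Finset.mem_univ j)
      have hi := (Finset.sum_eq_zero_iff_of_nonneg
        (fun i _ => Complex.normSq_nonneg (K i j))).mp hj i (Finset.mem_univ i)
      simpa using Complex.normSq_eq_zero.mp hi
    show Bᴴ = B
    have := sub_eq_zero.mp h7
    exact this.symm
  · -- inequality part
    intro A hA
    have h2 := (key A hA).2
    have e : (Matrix.trace (Sᴴ * U * (A * A))).re
        = ∑ i, ∑ j, ((U * A * A) i j * conj (S i j)).re := by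
      rw [Matrix.mul_assoc, htr (U * (A * A))]
      exact Finset.sum_congr rfl fun i _ => Finset.sum_congr rfl fun j _ => by
        rw [← Matrix.mul_assoc]
    have hsplit : ∑ i, ∑ j, (((U * A * A) i j * conj (S i j)).re
        + (((U * A) i j * conj (S i j)).im) ^ 2 / ‖U i j‖)
        = (∑ i, ∑ j, ((U * A * A) i j * conj (S i j)).re)
          + ∑ i, ∑ j, (((U * A) i j * conj (S i j)).im) ^ 2 / ‖U i j‖ := by
      rw [← Finset.sum_add_distrib]
      exact Finset.sum_congr rfl fun i _ => Finset.sum_add_distrib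
    rw [e, ← hsplit]
    exact h2
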